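/- Let X, Y be n×n real symmetric matrices with [X, I; I, Y] ≻ 0 and let Ξ be an invertible n×n real matrix. Define Ψ_P(X,Y,Ξ) = [Y, Ξ; Ξᵀ, Ξᵀ(Y − X⁻¹)⁻¹Ξ]. Then Ψ_P(X,Y,Ξ) is invertible with inverse equal to the block matrix [X, −X(Y − X⁻¹)Ξ⁻ᵀ; −Ξ⁻¹(Y − X⁻¹)X, Ξ⁻¹(YXY − Y)Ξ⁻ᵀ]; in particular, the top-left n×n block of Ψ_P(X,Y,Ξ)⁻¹ equals X. -/

import Mathlib

open Matrix

/-- **Explicit inverse of `Ψ_P`** (proof of Lemma D.2): for symmetric `X, Y`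
with `[X, I; I, Y] ≻ 0` and invertible `Ξ`, the matrix
`Ψ_P(X,Y,Ξ) = [Y, Ξ; Ξᵀ, Ξᵀ(Y − X⁻¹)⁻¹Ξ]` is invertible with inverse
`[X, −X(Y − X⁻¹)Ξ⁻ᵀ; −Ξ⁻¹(Y − X⁻¹)X, Ξ⁻¹(YXY − Y)Ξ⁻ᵀ]`; in particular the
top-left block of `Ψ_P(X,Y,Ξ)⁻¹` equals `X`. -/
theorem psiP_inverse {n : ℕ} {X Y Ξ : Matrix (Fin n) (Fin n) ℝ}
    (hX : X.IsSymm) (hY : Y.IsSymm) (hΞ : IsUnit Ξ)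
    (hXY : (Matrix.fromBlocks X (1 : Matrix (Fin n) (Fin n) ℝ)
      (1 : Matrix (Fin n) (Fin n) ℝ) Y).PosDef) :
    (Matrix.fromBlocks Y Ξ Ξᵀ (Ξᵀ * (Y - X⁻¹)⁻¹ * Ξ)) *
      (Matrix.fromBlocks X (-(X * (Y - X⁻¹) * (Ξ⁻¹)ᵀ))
        (-(Ξ⁻¹ * (Y - X⁻¹) * X)) (Ξ⁻¹ * (Y * X * Y - Y) * (Ξ⁻¹)ᵀ)) = 1 ∧
    (Matrix.fromBlocks X (-(X * (Y - X⁻¹) * (Ξ⁻¹)ᵀ))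
        (-(Ξ⁻¹ * (Y - X⁻¹) * X)) (Ξ⁻¹ * (Y * X * Y - Y) * (Ξ⁻¹)ᵀ)) *
      (Matrix.fromBlocks Y Ξ Ξᵀ (Ξᵀ * (Y - X⁻¹)⁻¹ * Ξ)) = 1 ∧
    (Matrix.fromBlocks Y Ξ Ξᵀ (Ξᵀ * (Y - X⁻¹)⁻¹ * Ξ))⁻¹ =
      Matrix.fromBlocks X (-(X * (Y - X⁻¹) * (Ξ⁻¹)ᵀ))
        (-(Ξ⁻¹ * (Y - X⁻¹) * X)) (Ξ⁻¹ * (Y * X * Y - Y) * (Ξ⁻¹)ᵀ) ∧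
    ((Matrix.fromBlocks Y Ξ Ξᵀ (Ξᵀ * (Y - X⁻¹)⁻¹ * Ξ))⁻¹).toBlocks₁₁ = X := by
  -- `X` is positive definite, hence invertible
  have hXherm : X.IsHermitian := by
    rwa [Matrix.IsHermitian, conjTranspose_eq_transpose_of_trivial]
  have hXpd : X.PosDef := by
    refine Matrix.PosDef.of_dotProduct_mulVec_pos hXherm fun x hx => ?_
    have hv : Sum.elim x (0 : Fin n → ℝ) ≠ 0 := by
      intro h; apply hx; funext i; exact congrFun h (Sum.inl i)
    have h := hXY.dotProduct_mulVec_pos hv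
    simpa [fromBlocks_mulVec, sumElim_dotProduct_sumElim, Function.star_sumElim] using h
  have hXdet : IsUnit X.det := hXpd.det_pos.ne'.isUnit
  haveI : Invertible X := X.invertibleOfIsUnitDet hXdet
  -- the Schur complement `Y - X⁻¹` is invertible
  have hSdet : IsUnit (Y - X⁻¹).det := by
    have hd := hXY.det_pos
    rw [det_fromBlocks₁₁, invOf_eq_nonsing_inv, mul_one, one_mul] at hd
    refine isUnit_iff_ne_zero.2 fun h => ?_
    rw [h, mul_zero] at hd; exact lt_irrefl 0 hd
  -- basic inverse identities
  have h1 : X * X⁻¹ = 1 := mul_nonsing_inv X hXdet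
  have h2 : X⁻¹ * X = 1 := nonsing_inv_mul X hXdet
  have h3 : (Y - X⁻¹) * (Y - X⁻¹)⁻¹ = 1 := mul_nonsing_inv _ hSdet
  have h4 : (Y - X⁻¹)⁻¹ * (Y - X⁻¹) = 1 := nonsing_inv_mul _ hSdet
  have hΞdet : IsUnit Ξ.det := (isUnit_iff_isUnit_det Ξ).1 hΞ
  have h5 : Ξ * Ξ⁻¹ = 1 := mul_nonsing_inv Ξ hΞdet
  have h6 : Ξ⁻¹ * Ξ = 1 := nonsing_inv_mul Ξ hΞdet
  have h7 : Ξᵀ * (Ξ⁻¹)ᵀ = 1 := by rw [← transpose_mul, h6, transpose_one]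
  have h8 : (Ξ⁻¹)ᵀ * Ξᵀ = 1 := by rw [← transpose_mul, h5, transpose_one]
  -- two factorizations of `YXY - Y`
  have key1 : Y * X * Y - Y = (Y - X⁻¹) * (X * Y) := by
    calc Y * X * Y - Y = (Y - X⁻¹) * (X * Y) + (X⁻¹ * X - 1) * Y := by noncomm_ring
      _ = (Y - X⁻¹) * (X * Y) := by rw [h2]; noncomm_ring
  have key2 : Y * X * Y - Y = (Y * X) * (Y - X⁻¹) := by
    calc Y * X * Y - Y = (Y * X) * (Y - X⁻¹) + Y * (X * X⁻¹ - 1) := by noncomm_ring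
      _ = (Y * X) * (Y - X⁻¹) := by rw [h1]; noncomm_ring
  -- block identities for `Ψ * Inv`
  have b11 : Y * X + Ξ * -(Ξ⁻¹ * (Y - X⁻¹) * X) = 1 := by
    calc Y * X + Ξ * -(Ξ⁻¹ * (Y - X⁻¹) * X)
        = (1 - Ξ * Ξ⁻¹) * ((Y - X⁻¹) * X) + (Y - (Y - X⁻¹)) * X := by noncomm_ring
      _ = X⁻¹ * X := by rw [h5, sub_sub_cancel]; noncomm_ring
      _ = 1 := h2
  have b12 : Y * -(X * (Y - X⁻¹) * (Ξ⁻¹)ᵀ) + Ξ * (Ξ⁻¹ * (Y * X * Y - Y) * (Ξ⁻¹)ᵀ) = 0 := by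
    calc Y * -(X * (Y - X⁻¹) * (Ξ⁻¹)ᵀ) + Ξ * (Ξ⁻¹ * (Y * X * Y - Y) * (Ξ⁻¹)ᵀ)
        = (Ξ * Ξ⁻¹ - 1) * ((Y * X * Y - Y) * (Ξ⁻¹)ᵀ)
            + (Y * (X * (Y - (Y - X⁻¹))) - Y) * (Ξ⁻¹)ᵀ := by noncomm_ring
      _ = (Y * (X * X⁻¹) - Y) * (Ξ⁻¹)ᵀ := by rw [h5, sub_sub_cancel]; noncomm_ring
      _ = 0 := by rw [h1]; noncomm_ring
  have b21 : Ξᵀ * X + Ξᵀ * (Y - X⁻¹)⁻¹ * Ξ * -(Ξ⁻¹ * (Y - X⁻¹) * X) = 0 := by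
    calc Ξᵀ * X + Ξᵀ * (Y - X⁻¹)⁻¹ * Ξ * -(Ξ⁻¹ * (Y - X⁻¹) * X)
        = Ξᵀ * X - Ξᵀ * ((Y - X⁻¹)⁻¹ * ((Ξ * Ξ⁻¹) * ((Y - X⁻¹) * X))) := by noncomm_ring
      _ = Ξᵀ * X - Ξᵀ * (((Y - X⁻¹)⁻¹ * (Y - X⁻¹)) * X) := by rw [h5]; noncomm_ring
      _ = 0 := by rw [h4]; noncomm_ring
  have b22 : Ξᵀ * -(X * (Y - X⁻¹) * (Ξ⁻¹)ᵀ)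
      + Ξᵀ * (Y - X⁻¹)⁻¹ * Ξ * (Ξ⁻¹ * (Y * X * Y - Y) * (Ξ⁻¹)ᵀ) = 1 := by
    calc Ξᵀ * -(X * (Y - X⁻¹) * (Ξ⁻¹)ᵀ)
          + Ξᵀ * (Y - X⁻¹)⁻¹ * Ξ * (Ξ⁻¹ * (Y * X * Y - Y) * (Ξ⁻¹)ᵀ)
        = Ξᵀ * ((Y - X⁻¹)⁻¹ * ((Ξ * Ξ⁻¹) * ((Y * X * Y - Y) * (Ξ⁻¹)ᵀ)))
            - Ξᵀ * (X * ((Y - X⁻¹) * (Ξ⁻¹)ᵀ)) := by noncomm_ring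
      _ = Ξᵀ * (((Y - X⁻¹)⁻¹ * (Y - X⁻¹)) * ((X * Y) * (Ξ⁻¹)ᵀ))
            - Ξᵀ * (X * ((Y - X⁻¹) * (Ξ⁻¹)ᵀ)) := by rw [h5, key1]; noncomm_ring
      _ = Ξᵀ * (X * ((Y - (Y - X⁻¹)) * (Ξ⁻¹)ᵀ)) := by rw [h4]; noncomm_ring
      _ = Ξᵀ * (X * (X⁻¹ * (Ξ⁻¹)ᵀ)) := by rw [sub_sub_cancel]
      _ = Ξᵀ * (Ξ⁻¹)ᵀ := by rw [← mul_assoc X, h1]; noncomm_ring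
      _ = 1 := h7
  -- block identities for `Inv * Ψ`
  have c11 : X * Y + -(X * (Y - X⁻¹) * (Ξ⁻¹)ᵀ) * Ξᵀ = 1 := by
    calc X * Y + -(X * (Y - X⁻¹) * (Ξ⁻¹)ᵀ) * Ξᵀ
        = X * (Y - (Y - X⁻¹)) - X * ((Y - X⁻¹) * ((Ξ⁻¹)ᵀ * Ξᵀ - 1)) := by noncomm_ring
      _ = X * X⁻¹ := by rw [h8, sub_sub_cancel]; noncomm_ring
      _ = 1 := h1
  have c12 : X * Ξ + -(X * (Y - X⁻¹) * (Ξ⁻¹)ᵀ) * (Ξᵀ * (Y - X⁻¹)⁻¹ * Ξ) = 0 := by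
    calc X * Ξ + -(X * (Y - X⁻¹) * (Ξ⁻¹)ᵀ) * (Ξᵀ * (Y - X⁻¹)⁻¹ * Ξ)
        = X * Ξ - X * ((Y - X⁻¹) * (((Ξ⁻¹)ᵀ * Ξᵀ) * ((Y - X⁻¹)⁻¹ * Ξ))) := by noncomm_ring
      _ = X * Ξ - X * (((Y - X⁻¹) * (Y - X⁻¹)⁻¹) * Ξ) := by rw [h8]; noncomm_ring
      _ = 0 := by rw [h3]; noncomm_ring
  have c21 : -(Ξ⁻¹ * (Y - X⁻¹) * X) * Y + Ξ⁻¹ * (Y * X * Y - Y) * (Ξ⁻¹)ᵀ * Ξᵀ = 0 := by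
    calc -(Ξ⁻¹ * (Y - X⁻¹) * X) * Y + Ξ⁻¹ * (Y * X * Y - Y) * (Ξ⁻¹)ᵀ * Ξᵀ
        = Ξ⁻¹ * ((Y * X * Y - Y) * ((Ξ⁻¹)ᵀ * Ξᵀ))
            - Ξ⁻¹ * ((Y - X⁻¹) * (X * Y)) := by noncomm_ring
      _ = Ξ⁻¹ * ((Y - X⁻¹) * (X * Y)) - Ξ⁻¹ * ((Y - X⁻¹) * (X * Y)) := by
            rw [h8, key1]; noncomm_ring
      _ = 0 := sub_self _
  have c22 : -(Ξ⁻¹ * (Y - X⁻¹) * X) * Ξ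
      + Ξ⁻¹ * (Y * X * Y - Y) * (Ξ⁻¹)ᵀ * (Ξᵀ * (Y - X⁻¹)⁻¹ * Ξ) = 1 := by
    calc -(Ξ⁻¹ * (Y - X⁻¹) * X) * Ξ
          + Ξ⁻¹ * (Y * X * Y - Y) * (Ξ⁻¹)ᵀ * (Ξᵀ * (Y - X⁻¹)⁻¹ * Ξ)
        = Ξ⁻¹ * ((Y * X * Y - Y) * (((Ξ⁻¹)ᵀ * Ξᵀ) * ((Y - X⁻¹)⁻¹ * Ξ)))
            - Ξ⁻¹ * (((Y - X⁻¹) * X) * Ξ) := by noncomm_ring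
      _ = Ξ⁻¹ * ((Y * X) * (((Y - X⁻¹) * (Y - X⁻¹)⁻¹) * Ξ))
            - Ξ⁻¹ * (((Y - X⁻¹) * X) * Ξ) := by rw [h8, key2]; noncomm_ring
      _ = Ξ⁻¹ * (((Y - (Y - X⁻¹)) * X) * Ξ) := by rw [h3]; noncomm_ring
      _ = Ξ⁻¹ * ((X⁻¹ * X) * Ξ) := by rw [sub_sub_cancel]
      _ = Ξ⁻¹ * Ξ := by rw [h2]; noncomm_ring
      _ = 1 := h6
  have p1 : (Matrix.fromBlocks Y Ξ Ξᵀ (Ξᵀ * (Y - X⁻¹)⁻¹ * Ξ)) *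
      (Matrix.fromBlocks X (-(X * (Y - X⁻¹) * (Ξ⁻¹)ᵀ))
        (-(Ξ⁻¹ * (Y - X⁻¹) * X)) (Ξ⁻¹ * (Y * X * Y - Y) * (Ξ⁻¹)ᵀ)) = 1 := by
    rw [Matrix.fromBlocks_multiply, b11, b12, b21, b22, Matrix.fromBlocks_one]
  have p2 : (Matrix.fromBlocks X (-(X * (Y - X⁻¹) * (Ξ⁻¹)ᵀ))
        (-(Ξ⁻¹ * (Y - X⁻¹) * X)) (Ξ⁻¹ * (Y * X * Y - Y) * (Ξ⁻¹)ᵀ)) *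
      (Matrix.fromBlocks Y Ξ Ξᵀ (Ξᵀ * (Y - X⁻¹)⁻¹ * Ξ)) = 1 := by
    rw [Matrix.fromBlocks_multiply, c11, c12, c21, c22, Matrix.fromBlocks_one]
  have p3 : (Matrix.fromBlocks Y Ξ Ξᵀ (Ξᵀ * (Y - X⁻¹)⁻¹ * Ξ))⁻¹ =
      Matrix.fromBlocks X (-(X * (Y - X⁻¹) * (Ξ⁻¹)ᵀ))
        (-(Ξ⁻¹ * (Y - X⁻¹) * X)) (Ξ⁻¹ * (Y * X * Y - Y) * (Ξ⁻¹)ᵀ) :=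
    inv_eq_right_inv p1
  exact ⟨p1, p2, p3, by rw [p3, Matrix.toBlocks_fromBlocks₁₁]⟩
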